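/- arXiv:2404.16318 — 4 statements merged into one kernel-verified Lean document; each statement's English description precedes it below -/
import Mathlib

section
/- Continuity of the limit map: consider ẋ = f(x) with f : ℝ^n → ℝ^n globally Lipschitz, and suppose (a) the system converges, i.e., for every x ∈ ℝ^n the limit φ̄(x) = lim_{t→∞} φ(t,x) exists, and (b) every equilibrium is stable, i.e., if f(x*) = 0 then for every ε > 0 there exists δ > 0 such that every solution starting in the ball B(x*,δ) remains in B(x*,ε) for all t > 0. Then the map φ̄ : ℝ^n → ℝ^n is continuous (and therefore Borel measurable). -/
open Finset Filter Topology

/-- `m` is a weighted median of the values `x` with respect to weights `w`. -/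
def IsWeightedMedian {n : ℕ} (x w : Fin n → ℝ) (m : ℝ) : Prop :=
  (∃ i, x i = m) ∧
  ∑ i ∈ univ.filter (fun i => x i < m), w i ≤ 1 / 2 ∧
  ∑ i ∈ univ.filter (fun i => m < x i), w i ≤ 1 / 2

/-- `W` is a row-stochastic matrix. -/
def RowStochastic {n : ℕ} (W : Matrix (Fin n) (Fin n) ℝ) : Prop :=
  (∀ i j, 0 ≤ W i j) ∧ ∀ i, ∑ j, W i j = 1

/-- `M` is a cohesive set of the influence network `G(W)`. -/
def Cohesive {n : ℕ} (W : Matrix (Fin n) (Fin n) ℝ) (M : Finset (Fin n)) : Prop :=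
  ∀ i ∈ M, (1 : ℝ) / 2 ≤ ∑ j ∈ M, W i j

/-- `M` is a maximal cohesive set of the influence network `G(W)`. -/
def MaxCohesive {n : ℕ} (W : Matrix (Fin n) (Fin n) ℝ) (M : Finset (Fin n)) : Prop :=
  Cohesive W M ∧ ∀ i ∉ M, ¬ ((1 : ℝ) / 2 < ∑ j ∈ M, W i j)

/-- `Med` is the weighted-median operator: `Med x i` is the weighted median of `x`
with respect to the `i`-th row of `W` that is closest to `x i`. -/
def IsMedSelection {n : ℕ} (W : Matrix (Fin n) (Fin n) ℝ)
    (Med : (Fin n → ℝ) → Fin n → ℝ) : Prop :=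
  ∀ x i, IsWeightedMedian x (W i) (Med x i) ∧
    ∀ m, IsWeightedMedian x (W i) m → |Med x i - x i| ≤ |m - x i|

/-- `φ` is the solution map of the ODE `ẋ = g(x)`: `φ x0` is the solution starting at `x0`. -/
def IsFlow {n : ℕ} (g : (Fin n → ℝ) → (Fin n → ℝ))
    (φ : (Fin n → ℝ) → ℝ → (Fin n → ℝ)) : Prop :=
  ∀ x, φ x 0 = x ∧ ∀ t : ℝ, HasDerivAt (φ x) (g (φ x t)) t

/-- `order^{≤ r}(x)`: indices whose value is among the `r` largest distinct values of `x`. -/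
noncomputable def orderLe {n : ℕ} (x : Fin n → ℝ) (r : ℕ) : Finset (Fin n) :=
  univ.filter (fun i => ((univ.image x).filter (fun v => x i < v)).card < r)

/-- The set of equilibria of the CTWM dynamics. -/
def Xeq {n : ℕ} (W : Matrix (Fin n) (Fin n) ℝ) : Set (Fin n → ℝ) :=
  {x | ∀ r : ℕ, 1 ≤ r → r ≤ (univ.image x).card → MaxCohesive W (orderLe x r)}

/-- The ω-limit set of a trajectory `φ`. -/
def omegaLimitSet {n : ℕ} (φ : ℝ → (Fin n → ℝ)) : Set (Fin n → ℝ) :=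
  {z | ∃ u : ℕ → ℝ, Tendsto u atTop atTop ∧ Tendsto (fun k => φ (u k)) atTop (𝓝 z)}


theorem limit_is_equilibrium {n : ℕ} (f : (Fin n → ℝ) → (Fin n → ℝ))
    (hfc : Continuous f) (g : ℝ → (Fin n → ℝ))
    (hg : ∀ t : ℝ, HasDerivAt g (f (g t)) t)
    (L : Fin n → ℝ) (hL : Tendsto g atTop (𝓝 L)) : f L = 0 := by
  have hgc : Continuous g := continuous_iff_continuousAt.2 fun t => (hg t).continuousAt
  have hfg : Tendsto (fun t => f (g t)) atTop (𝓝 (f L)) :=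
    (hfc.continuousAt.tendsto).comp hL
  -- g(t+1) - g(t) tends to 0
  have h0 : Tendsto (fun t : ℝ => g (t + 1) - g t) atTop (𝓝 (L - L)) := by
    exact (hL.comp (tendsto_atTop_add_const_right _ 1 tendsto_id)).sub hL
  rw [sub_self] at h0
  -- g(t+1) - g t = ∫_t^{t+1} f (g s) ds
  have hint : ∀ t : ℝ, g (t + 1) - g t = ∫ s in t..(t+1), f (g s) := by
    intro t
    rw [intervalIntegral.integral_eq_sub_of_hasDerivAt (fun s _ => hg s)
      ((by fun_prop : Continuous fun s => f (g s)).intervalIntegrable _ _)]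
  -- g(t+1) - g t tends to f L
  have h1 : Tendsto (fun t : ℝ => g (t + 1) - g t) atTop (𝓝 (f L)) := by
    rw [Metric.tendsto_atTop]
    intro ε hε
    rw [Metric.tendsto_atTop] at hfg
    obtain ⟨N, hN⟩ := hfg (ε / 2) (half_pos hε)
    refine ⟨N, fun t ht => ?_⟩
    rw [dist_eq_norm, hint t]
    have : (∫ s in t..(t+1), f (g s)) - f L = ∫ s in t..(t+1), (f (g s) - f L) := by
      rw [intervalIntegral.integral_sub ((by fun_prop : Continuous fun s => f (g s)).intervalIntegrable _ _)
        (intervalIntegrable_const), intervalIntegral.integral_const]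
      simp
    rw [this]
    have hb : ‖∫ s in t..(t+1), (f (g s) - f L)‖ ≤ (ε / 2) * |(t + 1) - t| := by
      apply intervalIntegral.norm_integral_le_of_norm_le_const
      intro s hs
      rw [Set.uIoc_of_le (by linarith)] at hs
      have := hN s (le_trans ht hs.1.le)
      rw [dist_eq_norm] at this
      exact this.le
    simp only [add_sub_cancel_left, abs_one, mul_one] at hb
    linarith
  have := tendsto_nhds_unique h1 h0
  exact this

theorem flow_semigroup {n : ℕ} (f : (Fin n → ℝ) → (Fin n → ℝ)) (K : NNReal)
    (hf : LipschitzWith K f) (φ : (Fin n → ℝ) → ℝ → (Fin n → ℝ)) (hφ : IsFlow f φ)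
    (y : Fin n → ℝ) (T : ℝ) (t : ℝ) (ht : 0 ≤ t) :
    φ (φ y T) t = φ y (T + t) := by
  have hc : ∀ z, Continuous (φ z) :=
    fun z => continuous_iff_continuousAt.2 fun s => ((hφ z).2 s).continuousAt
  have hg : ∀ s : ℝ, HasDerivAt (fun s => φ y (T + s)) (f (φ y (T + s))) s := by
    intro s
    have := ((hφ y).2 (T + s)).scomp s ((hasDerivAt_id s).const_add T)
    simpa [Function.comp_def] using this
  have := ODE_solution_unique (v := fun _ : ℝ => f) (fun _ => hf)
    ((hc _).continuousOn : ContinuousOn (φ (φ y T)) (Set.Icc 0 t))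
    (fun s _ => ((hφ (φ y T)).2 s).hasDerivWithinAt)
    (((hc y).comp (continuous_const.add continuous_id)).continuousOn :
      ContinuousOn (fun s => φ y (T + s)) (Set.Icc 0 t))
    (fun s _ => (hg s).hasDerivWithinAt)
    (by simp [(hφ _).1])
  exact this ⟨ht, le_rfl⟩

/-- Continuity (and hence measurability) of the limit map of a convergent system
with stable equilibria. -/
theorem limit_map_continuous {n : ℕ}
    (f : (Fin n → ℝ) → (Fin n → ℝ)) (K : NNReal) (hf : LipschitzWith K f)
    (φ : (Fin n → ℝ) → ℝ → (Fin n → ℝ)) (hφ : IsFlow f φ)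
    (φbar : (Fin n → ℝ) → (Fin n → ℝ))
    (hconv : ∀ x : Fin n → ℝ, Tendsto (φ x) atTop (𝓝 (φbar x)))
    (hstab : ∀ xs : Fin n → ℝ, f xs = 0 → ∀ ε > (0:ℝ), ∃ δ > (0:ℝ),
        ∀ x ∈ Metric.ball xs δ, ∀ t > (0:ℝ), φ x t ∈ Metric.ball xs ε) :
    Continuous φbar ∧ Measurable φbar := by
  have hcφ : Continuous φbar := by
    rw [Metric.continuous_iff]
    intro x ε hε
    set xs := φbar x with hxs
    have heq : f xs = 0 :=
      limit_is_equilibrium f hf.continuous (φ x) (hφ x).2 xs (hconv x)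
    obtain ⟨δ, hδ, hstab'⟩ := hstab xs heq (ε / 2) (half_pos hε)
    -- pick a time T > 0 at which φ x is within δ/2 of xs
    obtain ⟨N, hN⟩ := (Metric.tendsto_atTop.1 (hconv x)) (δ / 2) (half_pos hδ)
    set T : ℝ := max N 1 with hT
    have hT1 : (0:ℝ) < T := lt_of_lt_of_le one_pos (le_max_right _ _)
    have hxT : dist (φ x T) xs < δ / 2 := hN T (le_max_left _ _)
    refine ⟨(δ / 2) / Real.exp (K * T), by positivity, fun y hy => ?_⟩
    -- Grönwall: trajectories stay close up to time T
    have hc : ∀ z, Continuous (φ z) :=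
      fun z => continuous_iff_continuousAt.2 fun s => ((hφ z).2 s).continuousAt
    have hgron : dist (φ y T) (φ x T) ≤ dist y x * Real.exp (K * T) := by
      have := dist_le_of_trajectories_ODE (v := fun _ : ℝ => f) (K := K)
        (fun _ => hf) ((hc y).continuousOn : ContinuousOn (φ y) (Set.Icc 0 T))
        (fun s _ => ((hφ y).2 s).hasDerivWithinAt)
        ((hc x).continuousOn : ContinuousOn (φ x) (Set.Icc 0 T))
        (fun s _ => ((hφ x).2 s).hasDerivWithinAt)
        (by rw [(hφ y).1, (hφ x).1]) T ⟨hT1.le, le_rfl⟩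
      simpa using this
    have hyx : dist y x < (δ / 2) / Real.exp (K * T) := hy
    have hclose : dist (φ y T) (φ x T) < δ / 2 := by
      calc dist (φ y T) (φ x T) ≤ dist y x * Real.exp (K * T) := hgron
        _ < ((δ / 2) / Real.exp (K * T)) * Real.exp (K * T) := by
            exact mul_lt_mul_of_pos_right hyx (Real.exp_pos _)
        _ = δ / 2 := div_mul_cancel₀ _ (Real.exp_pos _).ne'
    have hmem : φ y T ∈ Metric.ball xs δ := by
      rw [Metric.mem_ball]
      calc dist (φ y T) xs ≤ dist (φ y T) (φ x T) + dist (φ x T) xs := dist_triangle _ _ _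
        _ < δ / 2 + δ / 2 := add_lt_add hclose hxT
        _ = δ := add_halves δ
    -- the trajectory of y stays in the ε/2-ball around xs after time T
    have htail : ∀ t > (0:ℝ), φ y (T + t) ∈ Metric.ball xs (ε / 2) := by
      intro t ht
      rw [← flow_semigroup f K hf φ hφ y T t ht.le]
      exact hstab' (φ y T) hmem t ht
    -- therefore the limit φbar y is within ε/2 ≤ ε of xs
    have htend : Tendsto (fun t : ℝ => φ y (T + t)) atTop (𝓝 (φbar y)) :=
      (hconv y).comp (tendsto_atTop_add_const_left _ T tendsto_id)
    have hball : φbar y ∈ Metric.closedBall xs (ε / 2) := by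
      refine Metric.isClosed_closedBall.mem_of_tendsto htend ?_
      filter_upwards [eventually_gt_atTop 0] with t ht
      exact Metric.ball_subset_closedBall (htail t ht)
    have : dist (φbar y) xs ≤ ε / 2 := Metric.mem_closedBall.1 hball
    linarith
  exact ⟨hcφ, hcφ.measurable⟩
end

section
/- Local growth without overtaking: let φ(t,x0) be the solution of the CTWM dynamics and suppose that at some time t, Med_i(φ(t,x0);W) > φ_i(t,x0) for some agent i. Then there exists a time t' > t such that φ_i(t',x0) > φ_i(t,x0), and φ_i(t',x0) < φ_j(t',x0) for every j such that φ_j(t,x0) > φ_i(t,x0); that is, x_i increases but does not exceed any agent that had a larger opinion at time t. -/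
open Finset Filter Topology

/-- Local growth without overtaking: if agent `i`'s weighted median exceeds its current
opinion, then at some later time its opinion has increased but has not exceeded the
opinion of any agent that had a larger opinion. -/
theorem local_growth_without_overtaking {n : ℕ}
    (W : Matrix (Fin n) (Fin n) ℝ) (hW : RowStochastic W)
    (Med : (Fin n → ℝ) → Fin n → ℝ) (hMed : IsMedSelection W Med)
    (φ : (Fin n → ℝ) → ℝ → (Fin n → ℝ))
    (hφ : IsFlow (fun x => Med x - x) φ)
    (x0 : Fin n → ℝ) (t : ℝ) (ht : 0 ≤ t) (i : Fin n)
    (hgt : φ x0 t i < Med (φ x0 t) i) :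
    ∃ t' : ℝ, t < t' ∧ φ x0 t i < φ x0 t' i ∧
      ∀ j : Fin n, φ x0 t i < φ x0 t j → φ x0 t' i < φ x0 t' j := by
  have hD : ∀ s : ℝ, HasDerivAt (φ x0) (Med (φ x0 s) - φ x0 s) s := (hφ x0).2
  have hcomp : ∀ (s : ℝ) (j : Fin n),
      HasDerivAt (fun u => φ x0 u j) ((Med (φ x0 s) - φ x0 s) j) s := by
    intro s j
    exact hasDerivAt_pi.1 (hD s) j
  -- derivative of component i at t is positive
  have hd : (0 : ℝ) < (Med (φ x0 t) - φ x0 t) i := by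
    simp only [Pi.sub_apply]; linarith
  -- eventually in 𝓝[>] t, φ x0 s i > φ x0 t i
  have hslope : Tendsto (slope (fun u => φ x0 u i) t) (𝓝[≠] t)
      (𝓝 ((Med (φ x0 t) - φ x0 t) i)) :=
    hasDerivAt_iff_tendsto_slope.1 (hcomp t i)
  have hmem : 𝓝[>] t ≤ 𝓝[≠] t :=
    nhdsWithin_mono t (fun s hs => ne_of_gt hs)
  have h1 : ∀ᶠ s in 𝓝[>] t, φ x0 t i < φ x0 s i := by
    have hpos : ∀ᶠ s in 𝓝[>] t, 0 < slope (fun u => φ x0 u i) t s :=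
      (hslope.mono_left hmem).eventually (eventually_gt_nhds hd)
    filter_upwards [hpos, self_mem_nhdsWithin] with s hslopes hs
    have hst : 0 < s - t := sub_pos.2 hs
    have : 0 < (φ x0 s i - φ x0 t i) / (s - t) := by
      simpa [slope_def_field, div_eq_inv_mul] using hslopes
    have := (div_pos_iff.1 this)
    rcases this with ⟨h, _⟩ | ⟨_, h⟩
    · linarith
    · linarith
  -- eventually, no overtaking
  have h2 : ∀ᶠ s in 𝓝[>] t, ∀ j : Fin n, φ x0 t i < φ x0 t j → φ x0 s i < φ x0 s j := by
    rw [Filter.eventually_all]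
    intro j
    by_cases hj : φ x0 t i < φ x0 t j
    · have hcont : ContinuousAt (fun s => φ x0 s j - φ x0 s i) t :=
        ((hcomp t j).continuousAt.sub (hcomp t i).continuousAt)
      have : ∀ᶠ s in 𝓝 t, 0 < φ x0 s j - φ x0 s i :=
        hcont.eventually (eventually_gt_nhds (by linarith : (0:ℝ) < φ x0 t j - φ x0 t i))
      filter_upwards [nhdsWithin_le_nhds this] with s hs _
      linarith
    · filter_upwards with s hs; exact absurd hs hj
  obtain ⟨t', ht'⟩ := ((h1.and h2).and self_mem_nhdsWithin).exists
  exact ⟨t', ht'.2, ht'.1.1, ht'.1.2⟩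
end

section
/- Upward behaviour from upward-repulsive states: suppose x0 ∈ ℝ^n is in the upward-repulsive class, i.e., there exist a cohesive set C and i* ∈ C with {i*} = argmin_{j∈C} x0_j and Σ_{j∈C, j≠i*} w_{i*j} > 1/2. Then there exist ε > 0 and a time τ ≥ 0 such that φ(τ,x0) ∈ X^a := {x ∈ ℝ^n : x_i ≥ min_{j∈C} x0_j + ε for all i ∈ C}, where X^a is positively invariant for the CTWM dynamics and is at positive distance from x0. -/
open Finset Filter Topology

/-- The set `{x : xᵢ ≥ c + ε for all i ∈ C}`. -/
def upperInvSet {n : ℕ} (C : Finset (Fin n)) (c ε : ℝ) : Set (Fin n → ℝ) :=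
  {x | ∀ i ∈ C, c + ε ≤ x i}

lemma med_lower_bound {n : ℕ} {W : Matrix (Fin n) (Fin n) ℝ} (hW : RowStochastic W)
    {Med : (Fin n → ℝ) → Fin n → ℝ} (hMed : IsMedSelection W Med)
    {C : Finset (Fin n)} (hC : Cohesive W C) {i : Fin n} (hi : i ∈ C)
    (x : Fin n → ℝ) : C.inf' ⟨i, hi⟩ x ≤ Med x i := by
  set a := C.inf' ⟨i, hi⟩ x with ha
  set m := Med x i with hm
  by_contra hcon
  push_neg at hcon
  obtain ⟨hmed, hmin⟩ := hMed x i
  obtain ⟨_, hlt, hgt⟩ := hmed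
  have haleC : ∀ j ∈ C, a ≤ x j := fun j hj => Finset.inf'_le _ hj
  have hCsub : C ⊆ univ.filter (fun j => m < x j) := by
    intro j hj
    simp only [Finset.mem_filter, Finset.mem_univ, true_and]
    exact lt_of_lt_of_le hcon (haleC j hj)
  have hhalf : (1:ℝ)/2 ≤ ∑ j ∈ univ.filter (fun j => m < x j), W i j :=
    le_trans (hC i hi) (Finset.sum_le_sum_of_subset_of_nonneg hCsub
      (fun j _ _ => hW.1 i j))
  -- weights outside C with m < x j vanish
  have hzero : ∀ j, j ∉ C → m < x j → W i j = 0 := by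
    have hsplit : ∑ j ∈ univ.filter (fun j => m < x j), W i j
        = ∑ j ∈ C, W i j + ∑ j ∈ (univ.filter (fun j => m < x j)) \ C, W i j := by
      rw [← Finset.sum_sdiff hCsub]; ring
    have hle0 : ∑ j ∈ (univ.filter (fun j => m < x j)) \ C, W i j ≤ 0 := by
      have := hC i hi
      linarith [hgt, hsplit]
    have heq0 : ∑ j ∈ (univ.filter (fun j => m < x j)) \ C, W i j = 0 :=
      le_antisymm hle0 (Finset.sum_nonneg fun j _ => hW.1 i j)
    intro j hjC hjm
    have hjmem : j ∈ (univ.filter (fun j => m < x j)) \ C := by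
      simp [Finset.mem_sdiff, hjC, hjm]
    have := (Finset.sum_eq_zero_iff_of_nonneg fun j _ => hW.1 i j).1 heq0 j hjmem
    exact this
  -- sum over {x j ≤ m} ≤ 1/2
  have hlem : ∑ j ∈ univ.filter (fun j => x j ≤ m), W i j ≤ 1/2 := by
    have htot : ∑ j ∈ univ.filter (fun j => x j ≤ m), W i j
        + ∑ j ∈ univ.filter (fun j => m < x j), W i j = 1 := by
      rw [← hW.2 i]
      rw [← Finset.sum_filter_add_sum_filter_not univ (fun j => x j ≤ m) (W i)]
      congr 1
      apply Finset.sum_congr _ (fun _ _ => rfl)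
      apply Finset.filter_congr
      intro j _
      simp [not_le]
    linarith
  -- a is a weighted median
  have hamed : IsWeightedMedian x (W i) a := by
    refine ⟨?_, ?_, ?_⟩
    · obtain ⟨j, hj, hje⟩ := Finset.exists_mem_eq_inf' (⟨i, hi⟩ : C.Nonempty) x
      exact ⟨j, hje.symm⟩
    · have hsplit := Finset.sum_filter_add_sum_filter_not (univ.filter (fun j => x j < a)) (fun j => x j ≤ m) (W i)
      have h2 : ∑ j ∈ (univ.filter (fun j => x j < a)).filter (fun j => ¬ x j ≤ m), W i j = 0 := by
        apply Finset.sum_eq_zero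
        intro j hj
        simp only [Finset.mem_filter, Finset.mem_univ, true_and, not_le] at hj
        have hjC : j ∉ C := fun hjC => absurd (haleC j hjC) (not_le.2 hj.1)
        exact hzero j hjC hj.2
      have h3 : ∑ j ∈ (univ.filter (fun j => x j < a)).filter (fun j => x j ≤ m), W i j
          ≤ ∑ j ∈ univ.filter (fun j => x j ≤ m), W i j := by
        apply Finset.sum_le_sum_of_subset_of_nonneg _ (fun j _ _ => hW.1 i j)
        intro j hj
        simp only [Finset.mem_filter, Finset.mem_univ, true_and] at hj ⊢
        exact hj.2
      linarith [hlem, hsplit, h2, h3]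
    · calc ∑ j ∈ univ.filter (fun j => a < x j), W i j
          ≤ ∑ j ∈ univ.filter (fun j => m < x j), W i j :=
            Finset.sum_le_sum_of_subset_of_nonneg
              (by intro j hj; simp only [Finset.mem_filter, Finset.mem_univ, true_and] at hj ⊢;
                  exact hcon.trans hj) (fun j _ _ => hW.1 i j)
        _ ≤ 1/2 := hgt
  have hax : a ≤ x i := haleC i hi
  have h1 := hmin a hamed
  rw [abs_of_nonpos (by simp only [← hm]; linarith : Med x i - x i ≤ 0), abs_of_nonpos (by linarith : a - x i ≤ 0)] at h1
  simp only [← hm] at h1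
  linarith

lemma min_mono {n : ℕ} {W : Matrix (Fin n) (Fin n) ℝ} (hW : RowStochastic W)
    {Med : (Fin n → ℝ) → Fin n → ℝ} (hMed : IsMedSelection W Med)
    {φ : (Fin n → ℝ) → ℝ → (Fin n → ℝ)} (hφ : IsFlow (fun x => Med x - x) φ)
    {C : Finset (Fin n)} (hC : Cohesive W C) {i0 : Fin n} (hi0 : i0 ∈ C)
    (y : Fin n → ℝ) {a b : ℝ} (hab : a ≤ b) :
    C.inf' ⟨i0, hi0⟩ (φ y a) ≤ C.inf' ⟨i0, hi0⟩ (φ y b) := by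
  have hne : C.Nonempty := ⟨i0, hi0⟩
  have hd := (hφ y).2
  have hderiv : ∀ (j : Fin n) (t : ℝ),
      HasDerivAt (fun s => φ y s j) (Med (φ y t) j - φ y t j) t := by
    intro j t
    have := hasDerivAt_pi.1 (hd t) j
    simpa using this
  have hcontj : ∀ j : Fin n, Continuous (fun s => φ y s j) := fun j =>
    continuous_iff_continuousAt.2 fun t => (hderiv j t).continuousAt
  set mfun : ℝ → ℝ := fun t => C.inf' hne (φ y t) with hmfun
  have hmcont : Continuous mfun :=
    Continuous.finset_inf'_apply hne (fun j _ => hcontj j)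
  set f : ℝ → ℝ := fun t => -mfun t with hf
  have hslopeH : ∀ t ∈ Set.Ico a b, ∀ r : ℝ, (fun _ : ℝ => (0:ℝ)) t < r →
      ∃ᶠ z in 𝓝[>] t, (z - t)⁻¹ * (f z - f t) < r := by
    intro t _ r hr
    have hr' : (0:ℝ) < r := hr
    have hactive : ∃ j ∈ C, ∃ᶠ z in 𝓝[>] t, φ y z j = mfun z := by
      by_contra hcontra
      push_neg at hcontra
      have hev : ∀ᶠ z in 𝓝[>] t, ∀ j ∈ C, φ y z j ≠ mfun z :=
        C.eventually_all.2 fun j hj => (hcontra j hj)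
      obtain ⟨z, hz⟩ := hev.exists
      obtain ⟨j, hj, hje⟩ := Finset.exists_mem_eq_inf' hne (φ y z)
      exact hz j hj hje.symm
    obtain ⟨j, hj, hfreq⟩ := hactive
    have hjt : φ y t j = mfun t := by
      have hclosed : IsClosed {z : ℝ | φ y z j = mfun z} :=
        isClosed_eq (hcontj j) hmcont
      have ht' : t ∈ closure {z : ℝ | φ y z j = mfun z} :=
        mem_closure_iff_frequently.2 (hfreq.filter_mono nhdsWithin_le_nhds)
      rwa [hclosed.closure_eq] at ht'
    have hmed_ge : mfun t ≤ Med (φ y t) j := med_lower_bound hW hMed hC hj (φ y t)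
    have hder : HasDerivAt (fun s => -(φ y s j)) (-(Med (φ y t) j - φ y t j)) t :=
      (hderiv j t).neg
    have hslope := hasDerivAt_iff_tendsto_slope.1 hder
    have hslope' : Tendsto (slope (fun s => -(φ y s j)) t) (𝓝[>] t)
        (𝓝 (-(Med (φ y t) j - φ y t j))) :=
      hslope.mono_left (nhdsWithin_mono t (fun z hz => ne_of_gt hz))
    have hlt : -(Med (φ y t) j - φ y t j) < r := by
      have h0 : φ y t j = mfun t := hjt
      linarith
    have hev2 : ∀ᶠ z in 𝓝[>] t, slope (fun s => -(φ y s j)) t z < r :=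
      hslope'.eventually_lt_const hlt
    refine (hfreq.and_eventually hev2).mono ?_
    rintro z ⟨hz1, hz2⟩
    rw [slope_def_field] at hz2
    have heq : f z - f t = -(φ y z j) - (-(φ y t j)) := by
      simp only [hf, hz1, hjt]
    rw [mul_comm, ← div_eq_mul_inv, heq]
    exact hz2
  have key := le_gronwallBound_of_liminf_deriv_right_le (f := f)
      (f' := fun _ => (0:ℝ)) (δ := f a) (K := 0) (ε := 0) (a := a) (b := b)
      (hmcont.neg.continuousOn) hslopeH le_rfl
      (fun x _ => by simp) b ⟨hab, le_rfl⟩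
  have hg : gronwallBound (f a) 0 0 (b - a) = f a := by
    rw [gronwallBound_K0]; ring
  rw [hg] at key
  have : -mfun b ≤ -mfun a := key
  exact neg_le_neg_iff.1 this

/-- Upward behaviour from upward-repulsive states: the trajectory enters, within finite
time, a positively invariant set lying at positive distance from the initial state, in
which all opinions of the cohesive set `C` exceed the initial minimum over `C` by `ε`. -/
theorem upward_repulsive_behaviour {n : ℕ}
    (W : Matrix (Fin n) (Fin n) ℝ) (hW : RowStochastic W)
    (Med : (Fin n → ℝ) → Fin n → ℝ) (hMed : IsMedSelection W Med)
    (φ : (Fin n → ℝ) → ℝ → (Fin n → ℝ))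
    (hφ : IsFlow (fun x => Med x - x) φ)
    (x0 : Fin n → ℝ) (C : Finset (Fin n)) (hC : Cohesive W C)
    (istar : Fin n) (histar : istar ∈ C)
    (hmin : ∀ j ∈ C, j ≠ istar → x0 istar < x0 j)
    (hw : 1 / 2 < ∑ j ∈ C.erase istar, W istar j) :
    ∃ ε > (0:ℝ), ∃ τ ≥ (0:ℝ),
      φ x0 τ ∈ upperInvSet C (C.inf' ⟨istar, histar⟩ x0) ε ∧
      (∀ y ∈ upperInvSet C (C.inf' ⟨istar, histar⟩ x0) ε, ∀ t : ℝ, 0 ≤ t →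
        φ y t ∈ upperInvSet C (C.inf' ⟨istar, histar⟩ x0) ε) ∧
      0 < Metric.infDist x0 (upperInvSet C (C.inf' ⟨istar, histar⟩ x0) ε) := by
  have hne : C.Nonempty := ⟨istar, histar⟩
  set c := C.inf' ⟨istar, histar⟩ x0 with hc
  have hcval : c = x0 istar := by
    refine le_antisymm (Finset.inf'_le _ histar) (Finset.le_inf' _ _ ?_)
    intro j hj
    rcases eq_or_ne j istar with rfl | hne'
    · exact le_rfl
    · exact (hmin j hj hne').le
  have hd0 : x0 istar < Med x0 istar := by
    by_contra hle
    push_neg at hle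
    obtain ⟨⟨_, _, hgt⟩, _⟩ := hMed x0 istar
    have hsub : C.erase istar ⊆ univ.filter (fun j => Med x0 istar < x0 j) := by
      intro j hj
      rw [Finset.mem_erase] at hj
      simp only [Finset.mem_filter, Finset.mem_univ, true_and]
      exact lt_of_le_of_lt hle (hmin j hj.2 hj.1)
    have := Finset.sum_le_sum_of_subset_of_nonneg hsub (fun j _ _ => hW.1 istar j)
    linarith
  set d := Med x0 istar - x0 istar with hdd
  have hdpos : 0 < d := by simp only [hdd]; linarith
  have h0 : φ x0 0 = x0 := (hφ x0).1
  have hderi : HasDerivAt (fun s => φ x0 s istar) d 0 := by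
    have h := hasDerivAt_pi.1 ((hφ x0).2 0) istar
    rw [h0] at h
    simpa [hdd] using h
  have hslope := hasDerivAt_iff_tendsto_slope.1 hderi
  have hslope' : Tendsto (slope (fun s => φ x0 s istar) 0) (𝓝[>] 0) (𝓝 d) :=
    hslope.mono_left (nhdsWithin_mono 0 fun z hz => ne_of_gt hz)
  have hev1 : ∀ᶠ τ in 𝓝[>] (0:ℝ), d/2 < slope (fun s => φ x0 s istar) 0 τ :=
    hslope'.eventually_const_lt (by linarith)
  have hcontj : ∀ j : Fin n, Continuous (fun s => φ x0 s j) := fun j =>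
    continuous_iff_continuousAt.2 fun t => by
      have h := hasDerivAt_pi.1 ((hφ x0).2 t) j
      exact (h.continuousAt : ContinuousAt (fun s => φ x0 s j) t)
  have hev2 : ∀ᶠ τ in 𝓝[>] (0:ℝ), ∀ j ∈ C.erase istar, c < φ x0 τ j := by
    refine ((C.erase istar).eventually_all).2 ?_
    intro j hj
    rw [Finset.mem_erase] at hj
    have hcj : c < x0 j := by rw [hcval]; exact hmin j hj.2 hj.1
    have htend : Tendsto (fun s => φ x0 s j) (𝓝[>] 0) (𝓝 (x0 j)) := by
      have h := ((hcontj j).tendsto 0).mono_left (nhdsWithin_le_nhds (s := Set.Ioi (0:ℝ)))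
      rwa [show φ x0 0 j = x0 j from congrFun h0 j] at h
    exact htend.eventually_const_lt hcj
  have hev3 : ∀ᶠ τ in 𝓝[>] (0:ℝ), τ ∈ Set.Ioi (0:ℝ) := eventually_mem_nhdsWithin
  obtain ⟨τ, hτslope, hτerase, hτpos⟩ := (hev1.and (hev2.and hev3)).exists
  obtain ⟨hτerase, hτpos⟩ := (⟨hτerase, hτpos⟩ : _ ∧ _)
  have hτpos : (0:ℝ) < τ := hτpos
  have histarval : c < φ x0 τ istar := by
    rw [slope_def_field] at hτslope
    have hu0 : φ x0 0 istar = c := by rw [congrFun h0 istar, hcval]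
    rw [hu0, sub_zero] at hτslope
    rw [lt_div_iff₀ hτpos] at hτslope
    nlinarith
  have hallC : ∀ j ∈ C, c < φ x0 τ j := by
    intro j hj
    rcases eq_or_ne j istar with rfl | hne'
    · exact histarval
    · exact hτerase j (Finset.mem_erase.2 ⟨hne', hj⟩)
  set ε := C.inf' hne (φ x0 τ) - c with hε
  have hεpos : 0 < ε := by
    have h := Finset.lt_inf'_iff hne (f := φ x0 τ) (a := c)
    have := h.2 hallC
    simp only [hε]
    linarith
  refine ⟨ε, hεpos, τ, hτpos.le, ?_, ?_, ?_⟩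
  · intro i hi
    have h1 : C.inf' hne (φ x0 τ) ≤ φ x0 τ i := Finset.inf'_le _ hi
    simp only [hε]
    linarith
  · intro y hy t ht
    intro i hi
    have h1 : c + ε ≤ C.inf' hne y := Finset.le_inf' _ _ fun j hj => hy j hj
    have h3 : φ y 0 = y := (hφ y).1
    have h2 : C.inf' ⟨istar, histar⟩ (φ y 0) ≤ C.inf' ⟨istar, histar⟩ (φ y t) :=
      min_mono hW hMed hφ hC histar y ht
    rw [h3] at h2
    have h4 : C.inf' ⟨istar, histar⟩ (φ y t) ≤ φ y t i := Finset.inf'_le _ hi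
    calc c + ε ≤ C.inf' hne y := h1
      _ ≤ C.inf' ⟨istar, histar⟩ (φ y t) := h2
      _ ≤ φ y t i := h4
  · by_contra hle
    push_neg at hle
    have hnonempty : (upperInvSet C c ε).Nonempty :=
      ⟨fun _ => c + ε, fun i _ => le_rfl⟩
    have hlt : Metric.infDist x0 (upperInvSet C c ε) < ε := lt_of_le_of_lt hle hεpos
    obtain ⟨y, hy, hdist⟩ := (Metric.infDist_lt_iff hnonempty).1 hlt
    have h1 : c + ε ≤ y istar := hy istar histar
    have h2 : dist (x0 istar) (y istar) ≤ dist x0 y := dist_le_pi_dist x0 y istar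
    have h3 : ε ≤ dist (x0 istar) (y istar) := by
      rw [Real.dist_eq]
      have : x0 istar = c := hcval.symm
      rw [this]
      have : ε ≤ y istar - c := by linarith
      calc ε ≤ y istar - c := this
        _ ≤ |c - y istar| := by rw [abs_sub_comm]; exact le_abs_self _
    linarith
end

section
/- Pinning controllability of the CTWM dynamics: consider the pinned dynamics ẋ_i(t) = γ_i u + (1−γ_i)·Med_i(x(t);W) − x_i(t) for i ∈ V, where u ∈ ℝ is a fixed external opinion, γ_i ∈ (0,1] for every pinned agent i ∈ V_p, and γ_i = 0 for every unpinned agent i ∈ V\V_p. Then every solution converges to the consensus vector u·1_n for every initial condition x(0) ∈ ℝ^n if and only if every cohesive set of G(W) contains at least one agent of V_p. -/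
open Finset Filter Topology

section AuxLemmas

/-- A maximum of finitely many differentiable functions is nonincreasing provided that at
every time, every function attaining the maximum has nonpositive derivative. -/
lemma dini_antitone' {ι : Type*} {S : Finset ι} (hS : S.Nonempty)
    (f f' : ι → ℝ → ℝ) (hf : ∀ i t, HasDerivAt (f i) (f' i t) t)
    (hbound : ∀ t, ∀ i ∈ S, f i t = S.sup' hS (fun j => f j t) → f' i t ≤ 0) :
    Antitone (fun t => S.sup' hS (fun j => f j t)) := by
  classical
  set F : ℝ → ℝ := fun t => S.sup' hS (fun j => f j t) with hF
  have hcont : ∀ i, Continuous (f i) := fun i => by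
    rw [continuous_iff_continuousAt]; exact fun t => (hf i t).continuousAt
  have hFcont : Continuous F := by
    rw [continuous_iff_continuousAt]
    intro t
    exact ContinuousAt.finset_sup'_apply hS (fun i _ => (hcont i).continuousAt)
  intro a b hab
  have key : ∀ ⦃x⦄, x ∈ Set.Icc a b → F x ≤ F a := by
    apply image_le_of_liminf_slope_right_le_deriv_boundary (B := fun _ => F a)
      (B' := fun _ => 0)
    · exact hFcont.continuousOn
    · exact le_rfl
    · exact continuousOn_const
    · exact fun x _ => hasDerivWithinAt_const x _ _
    · intro x _ r hr
      set S' : Finset ι := S.filter (fun i => f i x = F x) with hS'def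
      have hS'ne : S'.Nonempty := by
        obtain ⟨i, hi, hieq⟩ := Finset.exists_mem_eq_sup' hS (fun j => f j x)
        exact ⟨i, Finset.mem_filter.2 ⟨hi, hieq.symm⟩⟩
      have hsupcont : Continuous (fun z => S'.sup' hS'ne (fun j => f j z)) := by
        rw [continuous_iff_continuousAt]
        intro t
        exact ContinuousAt.finset_sup'_apply hS'ne (fun i _ => (hcont i).continuousAt)
      have hev1 : ∀ᶠ z in 𝓝 x, ∀ i ∈ S, i ∉ S' → f i z < S'.sup' hS'ne (fun j => f j z) := by
        rw [eventually_all_finset]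
        intro i hi
        by_cases hi' : i ∈ S'
        · filter_upwards with z h; exact absurd hi' h
        · have hlt : f i x < F x := by
            rcases lt_or_eq_of_le (Finset.le_sup' (fun j => f j x) hi) with h | h
            · exact h
            · exact absurd (Finset.mem_filter.2 ⟨hi, h⟩) hi'
          have hxle : F x ≤ S'.sup' hS'ne (fun j => f j x) := by
            obtain ⟨k, hk⟩ := id hS'ne
            have h1 := Finset.le_sup' (fun j => f j x) hk
            have hkeq : f k x = F x := (Finset.mem_filter.1 hk).2
            linarith
          have hcc : ContinuousAt (fun z => (f i z, S'.sup' hS'ne (fun j => f j z))) x :=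
            ContinuousAt.prodMk (hcont i).continuousAt hsupcont.continuousAt
          have hopen : {p : ℝ × ℝ | p.1 < p.2} ∈ 𝓝 ((f i x, S'.sup' hS'ne (fun j => f j x))) := by
            apply IsOpen.mem_nhds isOpen_lt_prod
            simp only [Set.mem_setOf_eq]
            linarith
          filter_upwards [hcc.preimage_mem_nhds hopen] with z hz
          intro _; exact hz
      have hev2 : ∀ᶠ z in 𝓝[>] x, ∀ i ∈ S', slope (f i) x z < r := by
        rw [eventually_all_finset]
        intro i hi
        have hslope := hasDerivAt_iff_tendsto_slope.1 (hf i x)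
        have htd : Tendsto (slope (f i) x) (𝓝[>] x) (𝓝 (f' i x)) :=
          hslope.mono_left (nhdsWithin_mono x (fun z hz => ne_of_gt hz))
        have hlt : f' i x < r :=
          lt_of_le_of_lt (hbound x i (Finset.mem_filter.1 hi).1 (Finset.mem_filter.1 hi).2) hr
        exact htd.eventually_lt_const hlt
      apply Filter.Eventually.frequently
      filter_upwards [hev1.filter_mono nhdsWithin_le_nhds, hev2, self_mem_nhdsWithin]
        with z h1 h2 hz
      have hFz : F z ≤ S'.sup' hS'ne (fun j => f j z) := by
        apply Finset.sup'_le
        intro i hi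
        by_cases hi' : i ∈ S'
        · exact Finset.le_sup' (fun j => f j z) hi'
        · exact le_of_lt (h1 i hi hi')
      obtain ⟨j, hj, hjeq⟩ := Finset.exists_mem_eq_sup' hS'ne (fun i => f i z)
      have hjx : f j x = F x := (Finset.mem_filter.1 hj).2
      have hzx : (0:ℝ) < z - x := by simp only [Set.mem_Ioi] at hz; linarith
      have hnum : F z - F x ≤ f j z - f j x := by
        have : F z ≤ f j z := hFz.trans (le_of_eq hjeq)
        linarith
      calc slope F x z = (F z - F x) / (z - x) := by rw [slope_def_field]
        _ ≤ (f j z - f j x) / (z - x) := by gcongr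
        _ = slope (f j) x z := (slope_def_field _ _ _).symm
        _ < r := h2 j hj
  exact key (Set.right_mem_Icc.2 hab)

/-- Exponential comparison: if `f' = b - f` with `b ≤ B` beyond time `T`,
then `f` is trapped below `B + (f T - B) e^{T - t}`. -/
lemma comp_exp' {f b : ℝ → ℝ} {T B : ℝ}
    (hf : ∀ t, HasDerivAt f (b t - f t) t)
    (hb : ∀ t, T ≤ t → b t ≤ B) :
    ∀ t, T ≤ t → f t ≤ B + (f T - B) * Real.exp (T - t) := by
  set g : ℝ → ℝ := fun t => (f t - B) * Real.exp t with hg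
  have hg' : ∀ t, HasDerivAt g ((b t - B) * Real.exp t) t := by
    intro t
    have h1 : HasDerivAt (fun t => f t - B) (b t - f t) t := (hf t).sub_const B
    have h2 := h1.mul (Real.hasDerivAt_exp t)
    refine h2.congr_deriv ?_
    ring
  have hanti : AntitoneOn g (Set.Ici T) := by
    apply antitoneOn_of_deriv_nonpos (convex_Ici T)
    · exact (fun t _ => (hg' t).continuousAt.continuousWithinAt)
    · exact fun t _ => (hg' t).differentiableAt.differentiableWithinAt
    · intro t ht
      rw [(hg' t).deriv]
      rw [interior_Ici] at ht
      have := hb t (le_of_lt ht)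
      have := Real.exp_pos t
      nlinarith
  intro t ht
  have hm : g t ≤ g T := hanti (Set.self_mem_Ici) ht ht
  simp only [hg] at hm
  have hexp : (0:ℝ) < Real.exp t := Real.exp_pos t
  have h2 : f t - B ≤ (f T - B) * Real.exp T / Real.exp t := by
    rw [le_div_iff₀ hexp]; exact hm
  have h3 : (f T - B) * Real.exp T / Real.exp t = (f T - B) * Real.exp (T - t) := by
    rw [Real.exp_sub]; ring
  linarith [h2.trans_eq h3]

lemma limsup_le_of_comp' {f b : ℝ → ℝ} {T B : ℝ}
    (hf : ∀ t, HasDerivAt f (b t - f t) t)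
    (hb : ∀ t, T ≤ t → b t ≤ B)
    (hcob : IsCoboundedUnder (· ≤ ·) atTop f) :
    limsup f atTop ≤ B := by
  apply le_of_forall_pos_le_add
  intro ε hε
  apply limsup_le_of_le hcob
  have hexp : Tendsto (fun t : ℝ => (f T - B) * Real.exp (T - t)) atTop (𝓝 0) := by
    have h0 : Tendsto (fun t : ℝ => T - t) atTop atBot := by
      have := tendsto_atBot_add_const_left atTop T (tendsto_neg_atTop_atBot (G := ℝ))
      simpa [sub_eq_add_neg] using this
    have h1 : Tendsto (fun t : ℝ => Real.exp (T - t)) atTop (𝓝 0) :=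
      Real.tendsto_exp_atBot.comp h0
    simpa using h1.const_mul (f T - B)
  have hev : ∀ᶠ t in atTop, (f T - B) * Real.exp (T - t) < ε :=
    hexp.eventually_lt_const hε
  filter_upwards [hev, eventually_ge_atTop T] with t h1 h2
  have := comp_exp' hf hb t h2
  linarith

lemma sum_compl_le' {n : ℕ} {W : Matrix (Fin n) (Fin n) ℝ} (hW : RowStochastic W)
    {M : Finset (Fin n)} {i : Fin n} (hcoh : (1:ℝ)/2 ≤ ∑ j ∈ M, W i j) :
    ∑ j ∈ univ \ M, W i j ≤ 1/2 := by
  have := Finset.sum_sdiff (f := W i) (Finset.subset_univ M)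
  rw [hW.2 i] at this
  linarith

/-- The weighted median of an agent in a cohesive set lies between the extreme
opinions of the cohesive set. -/
lemma med_in_box' {n : ℕ} {W : Matrix (Fin n) (Fin n) ℝ} (hW : RowStochastic W)
    {Med : (Fin n → ℝ) → Fin n → ℝ} (hMed : IsMedSelection W Med)
    {M : Finset (Fin n)} (hM : M.Nonempty) (hcoh : Cohesive W M)
    (x : Fin n → ℝ) {i : Fin n} (hi : i ∈ M) :
    M.inf' hM x ≤ Med x i ∧ Med x i ≤ M.sup' hM x := by
  classical
  obtain ⟨⟨hex, hlow, hup⟩, hmin⟩ := hMed x i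
  constructor
  · by_contra h
    push_neg at h
    set v := M.inf' hM x with hv
    have hmedv : IsWeightedMedian x (W i) v := by
      refine ⟨?_, ?_, ?_⟩
      · obtain ⟨j, hj, hjeq⟩ := Finset.exists_mem_eq_inf' hM x
        exact ⟨j, hjeq.symm⟩
      · calc ∑ j ∈ univ.filter (fun j => x j < v), W i j
            ≤ ∑ j ∈ univ \ M, W i j := by
              apply Finset.sum_le_sum_of_subset_of_nonneg
              · intro j hj
                rw [Finset.mem_filter] at hj
                rw [Finset.mem_sdiff]
                refine ⟨Finset.mem_univ j, fun hjM => ?_⟩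
                exact absurd (Finset.inf'_le x hjM) (not_le.2 hj.2)
              · exact fun j _ _ => hW.1 i j
          _ ≤ 1/2 := sum_compl_le' hW (hcoh i hi)
      · calc ∑ j ∈ univ.filter (fun j => v < x j), W i j
            ≤ ∑ j ∈ univ.filter (fun j => Med x i < x j), W i j := by
              apply Finset.sum_le_sum_of_subset_of_nonneg
              · intro j hj
                rw [Finset.mem_filter] at hj ⊢
                exact ⟨hj.1, lt_trans h hj.2⟩
              · exact fun j _ _ => hW.1 i j
          _ ≤ 1/2 := hup
    have h1 := hmin v hmedv
    have h2 : v ≤ x i := Finset.inf'_le x hi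
    rw [abs_of_nonpos (by linarith), abs_of_nonpos (by linarith)] at h1
    linarith
  · by_contra h
    push_neg at h
    set v := M.sup' hM x with hv
    have hmedv : IsWeightedMedian x (W i) v := by
      refine ⟨?_, ?_, ?_⟩
      · obtain ⟨j, hj, hjeq⟩ := Finset.exists_mem_eq_sup' hM x
        exact ⟨j, hjeq.symm⟩
      · calc ∑ j ∈ univ.filter (fun j => x j < v), W i j
            ≤ ∑ j ∈ univ.filter (fun j => x j < Med x i), W i j := by
              apply Finset.sum_le_sum_of_subset_of_nonneg
              · intro j hj
                rw [Finset.mem_filter] at hj ⊢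
                exact ⟨hj.1, lt_trans hj.2 h⟩
              · exact fun j _ _ => hW.1 i j
          _ ≤ 1/2 := hlow
      · calc ∑ j ∈ univ.filter (fun j => v < x j), W i j
            ≤ ∑ j ∈ univ \ M, W i j := by
              apply Finset.sum_le_sum_of_subset_of_nonneg
              · intro j hj
                rw [Finset.mem_filter] at hj
                rw [Finset.mem_sdiff]
                refine ⟨Finset.mem_univ j, fun hjM => ?_⟩
                exact absurd (Finset.le_sup' x hjM) (not_le.2 hj.2)
              · exact fun j _ _ => hW.1 i j
          _ ≤ 1/2 := sum_compl_le' hW (hcoh i hi)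
    have h1 := hmin v hmedv
    have h2 : x i ≤ v := Finset.le_sup' x hi
    rw [abs_of_nonneg (by linarith), abs_of_nonneg (by linarith)] at h1
    linarith

/-- Core lemma for the backward direction: if every nonempty cohesive set contains a pinned
agent, then no agent's deviation can cluster at the asymptotic sup-norm level `Einf > 0`. -/
lemma no_max_cluster' {n : ℕ} {W : Matrix (Fin n) (Fin n) ℝ} (hW : RowStochastic W)
    {Vp : Finset (Fin n)} {γ : Fin n → ℝ}
    (hγp : ∀ i ∈ Vp, 0 < γ i ∧ γ i ≤ 1) (hγu : ∀ i ∉ Vp, γ i = 0)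
    (Hcoh : ∀ M : Finset (Fin n), M.Nonempty → Cohesive W M → ∃ i ∈ M, i ∈ Vp)
    (e d : Fin n → ℝ → ℝ) (F : ℝ → ℝ) (Einf : ℝ) (hE : 0 < Einf)
    (hFt : Tendsto F atTop (𝓝 Einf))
    (habs : ∀ i t, |e i t| ≤ F t)
    (hder : ∀ i t, HasDerivAt (e i) ((1 - γ i) * d i t - e i t) t)
    (hdk : ∀ i t, ∃ k, d i t = e k t)
    (hlow : ∀ i t, ∑ j ∈ univ.filter (fun j => e j t < d i t), W i j ≤ 1/2) :
    ∀ i, limsup (e i) atTop < Einf := by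
  classical
  have hγ0 : ∀ i, 0 ≤ γ i := by
    intro i; by_cases h : i ∈ Vp
    · exact (hγp i h).1.le
    · rw [hγu i h]
  have hγ1 : ∀ i, γ i ≤ 1 := by
    intro i; by_cases h : i ∈ Vp
    · exact (hγp i h).2
    · rw [hγu i h]; norm_num
  have hFev : ∀ ε > 0, ∀ᶠ t in atTop, F t ≤ Einf + ε := by
    intro ε hε
    exact hFt.eventually_le_const (show Einf < Einf + ε by linarith)
  have hbddle : ∀ i, IsBoundedUnder (· ≤ ·) atTop (e i) := by
    intro i
    obtain ⟨T, hT⟩ := (hFev 1 one_pos).exists_forall_of_atTop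
    exact ⟨Einf + 1, eventually_atTop.2 ⟨T, fun t ht =>
      le_trans (le_trans (le_abs_self _) (habs i t)) (hT t ht)⟩⟩
  have hbddge : ∀ i, IsBoundedUnder (· ≥ ·) atTop (e i) := by
    intro i
    obtain ⟨T, hT⟩ := (hFev 1 one_pos).exists_forall_of_atTop
    refine ⟨-(Einf + 1), eventually_atTop.2 ⟨T, fun t ht => ?_⟩⟩
    have h1 := (abs_le.1 (habs i t)).1
    have := hT t ht
    show e i t ≥ -(Einf + 1)
    simp only [ge_iff_le]
    linarith
  have hcob : ∀ i, IsCoboundedUnder (· ≤ ·) atTop (e i) :=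
    fun i => (hbddge i).isCoboundedUnder_le
  set L : Fin n → ℝ := fun i => limsup (e i) atTop with hL
  have hLle : ∀ i, L i ≤ Einf := by
    intro i
    apply le_of_forall_pos_le_add
    intro ε hε
    apply limsup_le_of_le (hcob i)
    filter_upwards [hFev ε hε] with t ht
    exact le_trans (le_trans (le_abs_self _) (habs i t)) ht
  by_contra hcon
  push_neg at hcon
  obtain ⟨i₀, hi₀⟩ := hcon
  set A : Finset (Fin n) := univ.filter (fun i => Einf ≤ L i) with hA
  have hAne : A.Nonempty := ⟨i₀, Finset.mem_filter.2 ⟨Finset.mem_univ _, hi₀⟩⟩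
  have hpin : ∀ i ∈ Vp, L i < Einf := by
    intro i hiVp
    have hγi := hγp i hiVp
    have key : ∀ ε > 0, L i ≤ (1 - γ i) * (Einf + ε) := by
      intro ε hε
      obtain ⟨T, hT⟩ := (hFev ε hε).exists_forall_of_atTop
      apply limsup_le_of_comp' (b := fun t => (1 - γ i) * d i t) (T := T)
        (fun t => hder i t) ?_ (hcob i)
      intro t ht
      show (1 - γ i) * d i t ≤ (1 - γ i) * (Einf + ε)
      obtain ⟨k, hk⟩ := hdk i t
      have h1 : d i t ≤ Einf + ε := by
        rw [hk]
        exact le_trans (le_trans (le_abs_self _) (habs k t)) (hT t ht)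
      have h2 : (0:ℝ) ≤ 1 - γ i := by linarith [hγ1 i]
      exact mul_le_mul_of_nonneg_left h1 h2
    have h3 : L i ≤ (1 - γ i) * Einf := by
      apply le_of_forall_pos_le_add
      intro ε hε
      have := key ε hε
      have h2 : (0:ℝ) ≤ 1 - γ i := by linarith [hγ1 i]
      nlinarith
    calc L i ≤ (1 - γ i) * Einf := h3
      _ < Einf := by nlinarith [hγi.1]
  have hAcoh : Cohesive W A := by
    intro i hiA
    have hiL : Einf ≤ L i := (Finset.mem_filter.1 hiA).2
    by_cases hAc : (univ \ A : Finset (Fin n)) = ∅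
    · have : A = univ := by
        rwa [Finset.sdiff_eq_empty_iff_subset, Finset.univ_subset_iff] at hAc
      rw [this, hW.2 i]; norm_num
    · have hAcne' : (univ \ A : Finset (Fin n)).Nonempty := Finset.nonempty_of_ne_empty hAc
      set c : ℝ := (univ \ A).sup' hAcne' L with hc
      have hclt : c < Einf := by
        rw [Finset.sup'_lt_iff]
        intro j hj
        have hjA : j ∉ A := (Finset.mem_sdiff.1 hj).2
        have : ¬ Einf ≤ L j := fun h => hjA (Finset.mem_filter.2 ⟨Finset.mem_univ _, h⟩)
        linarith [not_le.1 this]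
      set ε : ℝ := min ((Einf - c)/2) (Einf/2) with hε
      have hεpos : 0 < ε := lt_min (by linarith) (by linarith)
      have hεE : ε ≤ Einf/2 := min_le_right _ _
      have hcε : c < Einf - ε := by
        have h1 : ε ≤ (Einf - c)/2 := min_le_left _ _
        linarith
      have hev : ∀ᶠ t in atTop, ∀ j ∈ univ \ A, e j t < Einf - ε := by
        rw [eventually_all_finset]
        intro j hj
        have hLj : L j ≤ c := Finset.le_sup' L hj
        exact eventually_lt_of_limsup_lt (lt_of_le_of_lt hLj hcε) (hbddle j)
      obtain ⟨T, hT⟩ := hev.exists_forall_of_atTop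
      have hex : ∃ t, T ≤ t ∧ Einf - ε < d i t := by
        by_contra hno
        push_neg at hno
        have : limsup (e i) atTop ≤ Einf - ε := by
          apply limsup_le_of_comp' (b := fun t => (1 - γ i) * d i t) (T := T)
            (fun t => hder i t) ?_ (hcob i)
          intro t ht
          have hd := hno t ht
          show (1 - γ i) * d i t ≤ Einf - ε
          rcases le_or_gt 0 (d i t) with h | h
          · calc (1 - γ i) * d i t ≤ 1 * d i t := by
                  apply mul_le_mul_of_nonneg_right ?_ h
                  linarith [hγ0 i]
              _ = d i t := one_mul _
              _ ≤ Einf - ε := hd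
          · have : (1 - γ i) * d i t ≤ 0 := by
              apply mul_nonpos_of_nonneg_of_nonpos ?_ h.le
              linarith [hγ1 i]
            linarith
        linarith [hiL]
      obtain ⟨t, hTt, hdt⟩ := hex
      have hsub : (univ \ A : Finset (Fin n)) ⊆ univ.filter (fun j => e j t < d i t) := by
        intro j hj
        rw [Finset.mem_filter]
        exact ⟨Finset.mem_univ _, lt_trans (hT t hTt j hj) hdt⟩
      have h1 : ∑ j ∈ univ \ A, W i j ≤ 1/2 := by
        calc ∑ j ∈ univ \ A, W i j ≤ ∑ j ∈ univ.filter (fun j => e j t < d i t), W i j :=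
              Finset.sum_le_sum_of_subset_of_nonneg hsub (fun j _ _ => hW.1 i j)
          _ ≤ 1/2 := hlow i t
      have h2 := Finset.sum_sdiff (f := W i) (Finset.subset_univ A)
      rw [hW.2 i] at h2
      linarith
  obtain ⟨j, hjA, hjVp⟩ := Hcoh A hAne hAcoh
  have h1 : Einf ≤ L j := (Finset.mem_filter.1 hjA).2
  linarith [hpin j hjVp]

end AuxLemmas
/-- Pinning controllability of the CTWM dynamics: under the pinned dynamics
`ẋᵢ = γᵢ u + (1 - γᵢ) Medᵢ(x;W) - xᵢ`, every solution converges to the consensus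
vector `u·1` from every initial condition if and only if every (nonempty) cohesive
set of `G(W)` contains at least one pinned agent. -/
theorem ctwm_pinning_controllability {n : ℕ}
    (W : Matrix (Fin n) (Fin n) ℝ) (hW : RowStochastic W)
    (Med : (Fin n → ℝ) → Fin n → ℝ) (hMed : IsMedSelection W Med)
    (Vp : Finset (Fin n)) (γ : Fin n → ℝ) (u : ℝ)
    (hγp : ∀ i ∈ Vp, 0 < γ i ∧ γ i ≤ 1) (hγu : ∀ i ∉ Vp, γ i = 0)
    (φ : (Fin n → ℝ) → ℝ → (Fin n → ℝ))
    (hφ : IsFlow (fun x i => γ i * u + (1 - γ i) * Med x i - x i) φ) :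
    (∀ x0 : Fin n → ℝ, Tendsto (φ x0) atTop (𝓝 (fun _ : Fin n => u))) ↔
    (∀ M : Finset (Fin n), M.Nonempty → Cohesive W M → ∃ i ∈ M, i ∈ Vp) := by
  classical
  rcases Nat.eq_zero_or_pos n with hn | hn
  · subst hn
    apply iff_of_true
    · intro x0
      have hconst : φ x0 = fun _ => (fun i : Fin 0 => u) := by
        funext t i; exact i.elim0
      rw [hconst]; exact tendsto_const_nhds
    · intro M hM _
      obtain ⟨i, _⟩ := hM
      exact i.elim0
  have hγ0 : ∀ i, 0 ≤ γ i := by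
    intro i; by_cases h : i ∈ Vp
    · exact (hγp i h).1.le
    · rw [hγu i h]
  have hγ1 : ∀ i, γ i ≤ 1 := by
    intro i; by_cases h : i ∈ Vp
    · exact (hγp i h).2
    · rw [hγu i h]; norm_num
  constructor
  · -- forward direction
    intro Hconv M hMne hMcoh
    by_contra hnp
    push_neg at hnp
    obtain ⟨i₁, hi₁⟩ := hMne
    set c : ℝ := u + 1 with hc
    set x0 : Fin n → ℝ := fun _ => c with hx0
    set e : Fin n → ℝ → ℝ := fun i t => φ x0 t i - c with he
    have hderi : ∀ i t, HasDerivAt (fun s => φ x0 s i)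
        (γ i * u + (1 - γ i) * Med (φ x0 t) i - φ x0 t i) t := by
      intro i t
      exact hasDerivAt_pi.1 ((hφ x0).2 t) i
    have hdere : ∀ i, i ∈ M → ∀ t, HasDerivAt (e i) ((Med (φ x0 t) i - c) - e i t) t := by
      intro i hi t
      have h1 := (hderi i t).sub_const c
      refine h1.congr_deriv ?_
      have hg : γ i = 0 := hγu i (hnp i hi)
      simp only [he, hg]
      ring
    haveI : Nonempty {j // j ∈ M} := ⟨⟨i₁, hi₁⟩⟩
    set f : ({j // j ∈ M} × Bool) → ℝ → ℝ :=
      fun p t => cond p.2 (e p.1 t) (-(e p.1 t)) with hf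
    set f' : ({j // j ∈ M} × Bool) → ℝ → ℝ := fun p t => cond p.2
        ((Med (φ x0 t) p.1 - c) - e p.1 t) (-((Med (φ x0 t) p.1 - c) - e p.1 t)) with hf'
    have hSne : (Finset.univ : Finset ({j // j ∈ M} × Bool)).Nonempty := Finset.univ_nonempty
    have hfder : ∀ p, ∀ t : ℝ, HasDerivAt (f p) (f' p t) t := by
      rintro ⟨⟨i, hi⟩, b⟩ t
      cases b
      · exact (hdere i hi t).neg
      · exact hdere i hi t
    set F : ℝ → ℝ := fun t => Finset.univ.sup' hSne (fun p => f p t) with hF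
    have hbound : ∀ t : ℝ, ∀ p ∈ Finset.univ, f p t = F t → f' p t ≤ 0 := by
      rintro t ⟨⟨i, hi⟩, b⟩ _ heq
      have hbox := med_in_box' hW hMed ⟨i₁, hi₁⟩ hMcoh (φ x0 t) hi
      obtain ⟨jlo, hjlo, hjloeq⟩ := Finset.exists_mem_eq_inf' (⟨i₁, hi₁⟩ : M.Nonempty) (φ x0 t)
      obtain ⟨jhi, hjhi, hjhieq⟩ := Finset.exists_mem_eq_sup' (⟨i₁, hi₁⟩ : M.Nonempty) (φ x0 t)
      have hup : Med (φ x0 t) i - c ≤ F t := by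
        have h1 : Med (φ x0 t) i ≤ φ x0 t jhi := hjhieq ▸ hbox.2
        have h2 : e jhi t ≤ F t := by
          have := Finset.le_sup' (fun p => f p t)
            (Finset.mem_univ ((⟨jhi, hjhi⟩, true) : {j // j ∈ M} × Bool))
          exact this
        simp only [he] at h2
        linarith
      have hlo : c - Med (φ x0 t) i ≤ F t := by
        have h1 : φ x0 t jlo ≤ Med (φ x0 t) i := hjloeq ▸ hbox.1
        have h2 : -(e jlo t) ≤ F t := by
          have := Finset.le_sup' (fun p => f p t)
            (Finset.mem_univ ((⟨jlo, hjlo⟩, false) : {j // j ∈ M} × Bool))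
          exact this
        simp only [he] at h2
        linarith
      cases b
      · show -((Med (φ x0 t) i - c) - e i t) ≤ 0
        have h3 : -(e i t) = F t := heq
        linarith
      · show (Med (φ x0 t) i - c) - e i t ≤ 0
        have h3 : e i t = F t := heq
        linarith
    have hanti : Antitone F := dini_antitone' hSne f f' hfder hbound
    have hF0 : F 0 = 0 := by
      have hzero : ∀ p : {j // j ∈ M} × Bool, f p 0 = 0 := by
        rintro ⟨⟨i, hi⟩, b⟩
        have hic : φ x0 0 i = c := by rw [(hφ x0).1]
        cases b <;> simp [hf, he, hic]
      calc F 0 = Finset.univ.sup' hSne (fun _ => (0:ℝ)) := by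
            apply Finset.sup'_congr hSne rfl
            intro p _
            exact hzero p
        _ = 0 := Finset.sup'_const hSne 0
    have hconstM : ∀ t ≥ (0:ℝ), φ x0 t i₁ = c := by
      intro t ht
      have h1 : F t ≤ 0 := (hanti ht).trans_eq hF0
      have h2 : e i₁ t ≤ F t := by
        have := Finset.le_sup' (fun p => f p t)
          (Finset.mem_univ ((⟨i₁, hi₁⟩, true) : {j // j ∈ M} × Bool))
        exact this
      have h3 : -(e i₁ t) ≤ F t := by
        have := Finset.le_sup' (fun p => f p t)
          (Finset.mem_univ ((⟨i₁, hi₁⟩, false) : {j // j ∈ M} × Bool))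
        exact this
      have h4 : e i₁ t = 0 := by linarith
      simp only [he] at h4
      linarith
    have ht1 : Tendsto (fun t => φ x0 t i₁) atTop (𝓝 u) := (tendsto_pi_nhds.1 (Hconv x0)) i₁
    have hev : (fun _ : ℝ => c) =ᶠ[atTop] (fun t => φ x0 t i₁) := by
      filter_upwards [eventually_ge_atTop (0:ℝ)] with t ht
      exact (hconstM t ht).symm
    have ht2 : Tendsto (fun t => φ x0 t i₁) atTop (𝓝 c) :=
      tendsto_const_nhds.congr' hev
    have huc := tendsto_nhds_unique ht1 ht2
    rw [hc] at huc
    linarith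
  · -- backward direction
    intro Hcoh x0
    set e : Fin n → ℝ → ℝ := fun i t => φ x0 t i - u with he
    set d : Fin n → ℝ → ℝ := fun i t => Med (φ x0 t) i - u with hd
    have hder : ∀ i t, HasDerivAt (e i) ((1 - γ i) * d i t - e i t) t := by
      intro i t
      have h1 := (hasDerivAt_pi.1 ((hφ x0).2 t) i).sub_const u
      refine h1.congr_deriv ?_
      simp only [he, hd]
      ring
    have hdk : ∀ i t, ∃ k, d i t = e k t := by
      intro i t
      obtain ⟨k, hk⟩ := (hMed (φ x0 t) i).1.1
      exact ⟨k, by simp only [he, hd, hk]⟩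
    have hlow : ∀ i t, ∑ j ∈ univ.filter (fun j => e j t < d i t), W i j ≤ 1/2 := by
      intro i t
      have heqf : univ.filter (fun j => e j t < d i t)
          = univ.filter (fun j => φ x0 t j < Med (φ x0 t) i) := by
        apply Finset.filter_congr
        intro j _
        simp only [he, hd, sub_lt_sub_iff_right]
      rw [heqf]
      exact (hMed (φ x0 t) i).1.2.1
    have hup : ∀ i t, ∑ j ∈ univ.filter (fun j => d i t < e j t), W i j ≤ 1/2 := by
      intro i t
      have heqf : univ.filter (fun j => d i t < e j t)
          = univ.filter (fun j => Med (φ x0 t) i < φ x0 t j) := by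
        apply Finset.filter_congr
        intro j _
        simp only [he, hd, sub_lt_sub_iff_right]
      rw [heqf]
      exact (hMed (φ x0 t) i).1.2.2
    haveI : NeZero n := ⟨hn.ne'⟩
    set f : (Fin n × Bool) → ℝ → ℝ := fun p t => cond p.2 (e p.1 t) (-(e p.1 t)) with hf
    set f' : (Fin n × Bool) → ℝ → ℝ := fun p t => cond p.2
        ((1 - γ p.1) * d p.1 t - e p.1 t) (-((1 - γ p.1) * d p.1 t - e p.1 t)) with hf'
    have hSne : (univ : Finset (Fin n × Bool)).Nonempty := Finset.univ_nonempty
    have hfder : ∀ p, ∀ t : ℝ, HasDerivAt (f p) (f' p t) t := by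
      rintro ⟨i, b⟩ t
      cases b
      · exact (hder i t).neg
      · exact hder i t
    set F : ℝ → ℝ := fun t => univ.sup' hSne (fun p => f p t) with hF
    have habs : ∀ i t, |e i t| ≤ F t := by
      intro i t
      have h2 : e i t ≤ F t := by
        have := Finset.le_sup' (fun p => f p t) (Finset.mem_univ ((i, true) : Fin n × Bool))
        exact this
      have h3 : -(e i t) ≤ F t := by
        have := Finset.le_sup' (fun p => f p t) (Finset.mem_univ ((i, false) : Fin n × Bool))
        exact this
      rw [abs_le]; constructor <;> linarith
    have hbound : ∀ t : ℝ, ∀ p ∈ univ, f p t = F t → f' p t ≤ 0 := by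
      rintro t ⟨i, b⟩ _ heq
      obtain ⟨k, hk⟩ := hdk i t
      have hk' : |d i t| ≤ F t := by rw [hk]; exact habs k t
      have hcoef : (0:ℝ) ≤ 1 - γ i := by linarith [hγ1 i]
      have h1 : (1 - γ i) * d i t ≤ F t := by
        have ha : (1 - γ i) * d i t ≤ (1 - γ i) * |d i t| :=
          mul_le_mul_of_nonneg_left (le_abs_self _) hcoef
        have hb : (1 - γ i) * |d i t| ≤ |d i t| := by
          nlinarith [abs_nonneg (d i t), hγ0 i]
        linarith
      have h1' : -((1 - γ i) * d i t) ≤ F t := by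
        have ha : -((1 - γ i) * d i t) ≤ (1 - γ i) * |d i t| := by
          have := mul_le_mul_of_nonneg_left (neg_le_abs (d i t)) hcoef
          nlinarith
        have hb : (1 - γ i) * |d i t| ≤ |d i t| := by
          nlinarith [abs_nonneg (d i t), hγ0 i]
        linarith
      cases b
      · show -((1 - γ i) * d i t - e i t) ≤ 0
        have h3 : -(e i t) = F t := heq
        linarith
      · show (1 - γ i) * d i t - e i t ≤ 0
        have h3 : e i t = F t := heq
        linarith
    have hanti : Antitone F := dini_antitone' hSne f f' hfder hbound
    have hFnonneg : ∀ t, 0 ≤ F t := fun t => by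
      have h2 := habs ⟨0, hn⟩ t
      linarith [abs_nonneg (e ⟨0, hn⟩ t)]
    have hbdd : BddBelow (Set.range F) := ⟨0, by rintro y ⟨t, rfl⟩; exact hFnonneg t⟩
    set Einf : ℝ := ⨅ t, F t with hEinf
    have hFt : Tendsto F atTop (𝓝 Einf) := tendsto_atTop_ciInf hanti hbdd
    have hEnonneg : 0 ≤ Einf := ge_of_tendsto' hFt hFnonneg
    rcases eq_or_lt_of_le hEnonneg with hE0 | hEpos
    · -- Einf = 0 : convergence
      rw [tendsto_pi_nhds]
      intro i
      have hFt0 : Tendsto F atTop (𝓝 0) := by rwa [← hE0] at hFt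
      have h1 : Tendsto (e i) atTop (𝓝 0) :=
        squeeze_zero_norm' (Eventually.of_forall (fun t => by
          rw [Real.norm_eq_abs]; exact habs i t)) hFt0
      have h2 := h1.add_const u
      rw [zero_add] at h2
      apply h2.congr
      intro t
      simp [he]
    · -- Einf > 0 : contradiction
      exfalso
      have h1 := no_max_cluster' hW hγp hγu Hcoh e d F Einf hEpos hFt habs hder hdk hlow
      have habs2 : ∀ i t, |(fun i t => -(e i t)) i t| ≤ F t := by
        intro i t; rw [abs_neg]; exact habs i t
      have hder2 : ∀ i t, HasDerivAt ((fun i t => -(e i t)) i)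
          ((1 - γ i) * (fun i t => -(d i t)) i t - (fun i t => -(e i t)) i t) t := by
        intro i t
        have h := (hder i t).neg
        refine h.congr_deriv ?_
        beta_reduce
        ring
      have hdk2 : ∀ i t, ∃ k, (fun i t => -(d i t)) i t = (fun i t => -(e i t)) k t := by
        intro i t
        obtain ⟨k, hk⟩ := hdk i t
        exact ⟨k, by simp [hk]⟩
      have hlow2 : ∀ i t, ∑ j ∈ univ.filter
          (fun j => (fun i t => -(e i t)) j t < (fun i t => -(d i t)) i t), W i j ≤ 1/2 := by
        intro i t
        have heqf : univ.filter (fun j => -(e j t) < -(d i t))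
            = univ.filter (fun j => d i t < e j t) := by
          apply Finset.filter_congr
          intro j _
          simp [neg_lt_neg_iff]
        simp only []
        rw [heqf]
        exact hup i t
      have h2 := no_max_cluster' hW hγp hγu Hcoh (fun i t => -(e i t)) (fun i t => -(d i t))
        F Einf hEpos hFt habs2 hder2 hdk2 hlow2
      have hevlt : ∀ᶠ t in atTop, ∀ p ∈ (univ : Finset (Fin n × Bool)), f p t < Einf := by
        rw [eventually_all_finset]
        rintro ⟨i, b⟩ _
        have hbdd' : IsBoundedUnder (· ≤ ·) atTop (fun t => f (i, b) t) := by
          apply isBoundedUnder_of_eventually_le (a := Einf + 1)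
          filter_upwards [hFt.eventually_le_const (lt_add_one Einf)] with t ht
          have hfb : f (i, b) t ≤ |e i t| := by
            cases b
            · exact neg_le_abs _
            · exact le_abs_self _
          exact le_trans (le_trans hfb (habs i t)) ht
        cases b
        · exact eventually_lt_of_limsup_lt (h2 i) hbdd'
        · exact eventually_lt_of_limsup_lt (h1 i) hbdd'
      obtain ⟨t, ht⟩ := hevlt.exists
      obtain ⟨q, hq, hqe⟩ := Finset.exists_mem_eq_sup' hSne (fun p => f p t)
      have hle : Einf ≤ F t := ciInf_le hbdd t
      have hle2 : Einf ≤ f q t := by rw [← hqe]; exact hle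
      exact absurd (lt_of_le_of_lt hle2 (ht q hq)) (lt_irrefl _)
end
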